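/- Let g(a,r,t) = (1/2)(νr − μt) + (1/(2ℓ))·Σ_{i=1}^m max(‖x_i − a‖² − r, 0) + (b/(2ℓ))·Σ_{i=m+1}^ℓ max(r + t − ‖x_i − a‖², 0). If μ > bn/ℓ where n = ℓ − m, then g is unbounded below on the set {(a,r,t) : r ≥ 0, t ≥ 0}; in particular g(0,0,t) → −∞ as t → +∞. -/
import Mathlib


open Finset Filter

theorem stmt1
    {F : Type*} [NormedAddCommGroup F] [InnerProductSpace ℝ F]
    (l m : ℕ) (hm : 1 ≤ m) (hml : m ≤ l) (hn : 1 ≤ l - m)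
    (x : Fin l → F) (ν μ b : ℝ) (hν : 0 < ν) (hμ0 : 0 ≤ μ) (hb : 1 ≤ b)
    (g : F → ℝ → ℝ → ℝ)
    (hg : ∀ a r t, g a r t =
      (1/2) * (ν * r - μ * t)
      + (1/(2*(l:ℝ))) * ∑ i ∈ univ.filter (fun i : Fin l => (i : ℕ) < m),
          max (‖x i - a‖^2 - r) 0
      + (b/(2*(l:ℝ))) * ∑ i ∈ univ.filter (fun i : Fin l => m ≤ (i : ℕ)),
          max (r + t - ‖x i - a‖^2) 0)
    (hμ : b * ((l : ℝ) - (m : ℝ)) / (l : ℝ) < μ) :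
    (∀ M : ℝ, ∃ a : F, ∃ r t : ℝ, 0 ≤ r ∧ 0 ≤ t ∧ g a r t < M) ∧
    Tendsto (fun t : ℝ => g 0 0 t) atTop atBot := by
  have hml' : m < l := Nat.lt_of_sub_pos hn
  have hl0 : (0:ℝ) < (l:ℝ) := by exact_mod_cast Nat.pos_of_ne_zero (by omega)
  set K : ℝ := (1/(2*(l:ℝ))) * ∑ i ∈ univ.filter (fun i : Fin l => (i:ℕ) < m), ‖x i‖^2 with hK
  set c : ℝ := (b * ((l:ℝ) - (m:ℝ)) / (l:ℝ) - μ) / 2 with hc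
  have hcard : (univ.filter (fun i : Fin l => m ≤ (i:ℕ))).card = l - m := by
    have : (univ.filter (fun i : Fin l => m ≤ (i:ℕ))) = Finset.Ici (⟨m, hml'⟩ : Fin l) := by
      ext i; simp [Fin.le_def]
    rw [this, Fin.card_Ici]
  have hcneg : c < 0 := by
    rw [hc]; linarith
  have key : ∀ t : ℝ, 0 ≤ t → g 0 0 t ≤ K + c * t := by
    intro t ht
    rw [hg]
    have h1 : ∑ i ∈ univ.filter (fun i : Fin l => (i:ℕ) < m),
        max (‖x i - 0‖^2 - 0) 0 = ∑ i ∈ univ.filter (fun i : Fin l => (i:ℕ) < m), ‖x i‖^2 := by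
      apply Finset.sum_congr rfl
      intro i _
      rw [sub_zero, sub_zero, max_eq_left (by positivity)]
    have h2 : ∑ i ∈ univ.filter (fun i : Fin l => m ≤ (i:ℕ)),
        max (0 + t - ‖x i - 0‖^2) 0 ≤ ((l:ℝ) - (m:ℝ)) * t := by
      calc ∑ i ∈ univ.filter (fun i : Fin l => m ≤ (i:ℕ)), max (0 + t - ‖x i - 0‖^2) 0
          ≤ ∑ _i ∈ univ.filter (fun i : Fin l => m ≤ (i:ℕ)), t := by
            apply Finset.sum_le_sum
            intro i _
            apply max_le (by nlinarith [sq_nonneg ‖x i - 0‖]) ht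
        _ = ((l - m : ℕ) : ℝ) * t := by rw [Finset.sum_const, hcard, nsmul_eq_mul]
        _ = ((l:ℝ) - (m:ℝ)) * t := by
            congr 1
            push_cast [Nat.cast_sub hml]
            ring
    rw [h1]
    have hb2 : 0 ≤ b/(2*(l:ℝ)) := by positivity
    have := mul_le_mul_of_nonneg_left h2 hb2
    have heq : (1/2) * (ν * 0 - μ * t) + K + b/(2*(l:ℝ)) * (((l:ℝ) - (m:ℝ)) * t)
        = K + c * t := by
      rw [hc]; field_simp; ring
    calc (1/2) * (ν * 0 - μ * t) + (1/(2*(l:ℝ))) * ∑ i ∈ univ.filter (fun i : Fin l => (i:ℕ) < m), ‖x i‖^2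
            + (b/(2*(l:ℝ))) * ∑ i ∈ univ.filter (fun i : Fin l => m ≤ (i:ℕ)), max (0 + t - ‖x i - 0‖^2) 0
        ≤ (1/2) * (ν * 0 - μ * t) + K + b/(2*(l:ℝ)) * (((l:ℝ) - (m:ℝ)) * t) := by
          rw [hK]; linarith
      _ = K + c * t := heq
  have htend : Tendsto (fun t : ℝ => K + c * t) atTop atBot := by
    apply tendsto_atBot_add_const_left
    exact tendsto_id.const_mul_atTop_of_neg hcneg
  have hg0 : Tendsto (fun t : ℝ => g 0 0 t) atTop atBot := by
    apply tendsto_atBot_mono' _ _ htend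
    filter_upwards [eventually_ge_atTop (0:ℝ)] with t ht
    exact key t ht
  refine ⟨?_, hg0⟩
  intro M
  have h1 : ∀ᶠ t : ℝ in atTop, g 0 0 t < M := hg0.eventually (eventually_lt_atBot M)
  have h2 : ∀ᶠ t : ℝ in atTop, (0:ℝ) ≤ t := eventually_ge_atTop 0
  obtain ⟨t, ht1, ht2⟩ := (h1.and h2).exists
  exact ⟨0, 0, t, le_refl 0, ht2, ht1⟩
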